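/- Let d ∈ {2, 3}, λ > 0, and set c = √((d−2)² + 4λ), μ₊ = (−(d−2) + c)/2 and μ₋ = (−(d−2) − c)/2 (so μ± are the two roots of μ² + (d−2)μ − λ = 0). Let δ ∈ (0,1) satisfy μ₋ + d − δ > 0, let R ≥ 1, B ≥ 0, and let f : [R,∞) → ℝ be continuous with |f(t)| ≤ B·t^{−δ} for all t ≥ R. Define u(r) = (r^{μ₊}/c) ∫_R^r s^{μ₋ + d − 1} f(s) ds − (r^{μ₋}/c) ∫_R^r s^{μ₊ + d − 1} f(s) ds. Then u is twice continuously differentiable on (R,∞), satisfies u″(r) + ((d−1)/r)·u′(r) − (λ/r²)·u(r) = f(r) for all r > R, and |u(r)| ≤ (B/c)·( 1/(μ₋ + d − δ) + 1/(μ₊ + d − δ) )·r^{2−δ} for all r ≥ R. -/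

import Mathlib

open intervalIntegral Set

/-- The nonzero-mode step in Proposition 6.5: for an eigenvalue `λ > 0` with indicial roots
`μ± = (−(d−2) ± √((d−2)²+4λ))/2`, the variation-of-parameters solution
`u(r) = (r^{μ₊}/c) ∫_R^r s^{μ₋+d−1} f − (r^{μ₋}/c) ∫_R^r s^{μ₊+d−1} f`
is a `C²` solution of `u″ + ((d−1)/r)u′ − (λ/r²)u = f` on `(R,∞)` with
`|u(r)| ≤ (B/c)(1/(μ₋+d−δ) + 1/(μ₊+d−δ)) r^{2−δ}`. -/
theorem radial_poisson_nonzero_mode (d : ℕ) (hd : d = 2 ∨ d = 3)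
    (lam : ℝ) (hlam : 0 < lam) (c μp μm : ℝ)
    (hc : c = Real.sqrt (((d : ℝ) - 2) ^ 2 + 4 * lam))
    (hμp : μp = (-((d : ℝ) - 2) + c) / 2)
    (hμm : μm = (-((d : ℝ) - 2) - c) / 2)
    (δ R B : ℝ) (hδ : δ ∈ Set.Ioo (0 : ℝ) 1) (hδ' : 0 < μm + (d : ℝ) - δ)
    (hR : 1 ≤ R) (hB : 0 ≤ B)
    (f : ℝ → ℝ) (hf : ContinuousOn f (Set.Ici R))
    (hfb : ∀ t, R ≤ t → |f t| ≤ B * t ^ (-δ))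
    (u : ℝ → ℝ)
    (hu : ∀ r, u r =
      (r ^ μp / c) * (∫ s in R..r, s ^ (μm + (d : ℝ) - 1) * f s)
        - (r ^ μm / c) * (∫ s in R..r, s ^ (μp + (d : ℝ) - 1) * f s)) :
    ContDiffOn ℝ 2 u (Set.Ioi R) ∧
    (∀ r, R < r →
      deriv (deriv u) r + (((d : ℝ) - 1) / r) * deriv u r - (lam / r ^ 2) * u r = f r) ∧
    (∀ r, R ≤ r →
      |u r| ≤ (B / c) * (1 / (μm + (d : ℝ) - δ) + 1 / (μp + (d : ℝ) - δ)) * r ^ (2 - δ)) := by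
  obtain ⟨hδ0, hδ1⟩ := hδ
  have hR0 : (0:ℝ) < R := lt_of_lt_of_le one_pos hR
  have hcsq : c ^ 2 = ((d:ℝ) - 2) ^ 2 + 4 * lam := by
    rw [hc, Real.sq_sqrt (by positivity)]
  have hc0 : 0 < c := by rw [hc]; exact Real.sqrt_pos.2 (by positivity)
  have hsum : μp + μm = 2 - (d:ℝ) := by rw [hμp, hμm]; ring
  have hdiff : μp - μm = c := by rw [hμp, hμm]; ring
  have hrootp : μp ^ 2 + ((d:ℝ) - 2) * μp - lam = 0 := by rw [hμp]; nlinarith [hcsq]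
  have hrootm : μm ^ 2 + ((d:ℝ) - 2) * μm - lam = 0 := by rw [hμm]; nlinarith [hcsq]
  have hap : 0 < μp + (d:ℝ) - δ := by nlinarith [hδ', hc0, hdiff]
  set gm : ℝ → ℝ := fun s => s ^ (μm + (d:ℝ) - 1) * f s with hgmdef
  set gp : ℝ → ℝ := fun s => s ^ (μp + (d:ℝ) - 1) * f s with hgpdef
  set Fm : ℝ → ℝ := fun r => ∫ s in R..r, gm s with hFmdef
  set Fp : ℝ → ℝ := fun r => ∫ s in R..r, gp s with hFpdef
  have hu2 : ∀ r, u r = r ^ μp / c * Fm r - r ^ μm / c * Fp r := hu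
  have hpow : ∀ e : ℝ, ContinuousOn (fun s : ℝ => s ^ e) (Ici R) := by
    intro e s hs
    exact (Real.continuousAt_rpow_const s e
      (Or.inl (ne_of_gt (lt_of_lt_of_le hR0 hs)))).continuousWithinAt
  have hgmc : ContinuousOn gm (Ici R) := (hpow _).mul hf
  have hgpc : ContinuousOn gp (Ici R) := (hpow _).mul hf
  have hsubIcc : ∀ r : ℝ, R ≤ r → uIcc R r ⊆ Ici R := by
    intro r hr
    rw [uIcc_of_le hr]
    exact Icc_subset_Ici_self
  have hFTC : ∀ (g : ℝ → ℝ), ContinuousOn g (Ici R) → ∀ r ∈ Ioi R,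
      HasDerivAt (fun t => ∫ s in R..t, g s) (g r) r := by
    intro g hg r hr
    have hmem : Ici R ∈ nhds r := Ici_mem_nhds hr
    refine intervalIntegral.integral_hasDerivAt_right
      ((hg.mono (hsubIcc r (le_of_lt hr))).intervalIntegrable)
      ⟨Ici R, hmem, hg.aestronglyMeasurable measurableSet_Ici⟩
      (hg.continuousAt hmem)
  set v : ℝ → ℝ := fun r => μp * r ^ (μp - 1) / c * Fm r - μm * r ^ (μm - 1) / c * Fp r
    with hvdef
  set w : ℝ → ℝ := fun r =>
      μp * (μp - 1) / c * (r ^ (μp - 2) * Fm r) + μp / c * (r ^ (μp - 1) * gm r)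
        - μm * (μm - 1) / c * (r ^ (μm - 2) * Fp r) - μm / c * (r ^ (μm - 1) * gp r)
    with hwdef
  have hu' : ∀ r ∈ Ioi R, HasDerivAt u (v r) r := by
    intro r hr
    have hr0 : (0:ℝ) < r := hR0.trans hr
    have h1 : HasDerivAt (fun t : ℝ => t ^ μp / c) (μp * r ^ (μp - 1) / c) r :=
      (Real.hasDerivAt_rpow_const (Or.inl hr0.ne')).div_const c
    have h1' : HasDerivAt (fun t : ℝ => t ^ μm / c) (μm * r ^ (μm - 1) / c) r :=
      (Real.hasDerivAt_rpow_const (Or.inl hr0.ne')).div_const c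
    have h2 := (h1.mul (hFTC gm hgmc r hr)).sub (h1'.mul (hFTC gp hgpc r hr))
    have hueq : u = fun t => t ^ μp / c * Fm t - t ^ μm / c * Fp t := funext hu2
    rw [hueq]
    convert h2 using 1
    · rfl
    · rfl
    · rfl
    have hcan : r ^ μp * r ^ (μm + (d:ℝ) - 1) = r ^ μm * r ^ (μp + (d:ℝ) - 1) := by
      rw [← Real.rpow_add hr0, ← Real.rpow_add hr0]
      ring_nf
    simp only [hvdef, hgmdef, hgpdef]
    field_simp
    linear_combination (-(f r)) * hcan
  have hv' : ∀ r ∈ Ioi R, HasDerivAt v (w r) r := by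
    intro r hr
    have hr0 : (0:ℝ) < r := hR0.trans hr
    have h1 : HasDerivAt (fun t : ℝ => μp * t ^ (μp - 1) / c)
        (μp * ((μp - 1) * r ^ (μp - 1 - 1)) / c) r :=
      ((Real.hasDerivAt_rpow_const (Or.inl hr0.ne')).const_mul μp).div_const c
    have h1' : HasDerivAt (fun t : ℝ => μm * t ^ (μm - 1) / c)
        (μm * ((μm - 1) * r ^ (μm - 1 - 1)) / c) r :=
      ((Real.hasDerivAt_rpow_const (Or.inl hr0.ne')).const_mul μm).div_const c
    have h2 := (h1.mul (hFTC gm hgmc r hr)).sub (h1'.mul (hFTC gp hgpc r hr))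
    convert h2 using 1
    · rfl
    · rfl
    · rfl
    simp only [hwdef]
    rw [show μp - 1 - 1 = μp - 2 by ring, show μm - 1 - 1 = μm - 2 by ring]
    ring
  have hFmc : ContinuousOn Fm (Ioi R) := fun r hr =>
    (hFTC gm hgmc r hr).continuousAt.continuousWithinAt
  have hFpc : ContinuousOn Fp (Ioi R) := fun r hr =>
    (hFTC gp hgpc r hr).continuousAt.continuousWithinAt
  have hpow' : ∀ e : ℝ, ContinuousOn (fun s : ℝ => s ^ e) (Ioi R) := fun e =>
    (hpow e).mono Ioi_subset_Ici_self
  have hwc : ContinuousOn w (Ioi R) := by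
    refine (((continuousOn_const.mul ((hpow' _).mul hFmc)).add
      (continuousOn_const.mul ((hpow' _).mul (hgmc.mono Ioi_subset_Ici_self)))).sub
      (continuousOn_const.mul ((hpow' _).mul hFpc))).sub
      (continuousOn_const.mul ((hpow' _).mul (hgpc.mono Ioi_subset_Ici_self)))
  have hopen : IsOpen (Ioi R) := isOpen_Ioi
  have hdu : EqOn (deriv u) v (Ioi R) := fun r hr => (hu' r hr).deriv
  have hdv : EqOn (deriv v) w (Ioi R) := fun r hr => (hv' r hr).deriv
  have hv1 : ContDiffOn ℝ 1 v (Ioi R) := by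
    rw [show (1 : WithTop ℕ∞) = 0 + 1 from rfl, contDiffOn_succ_iff_deriv_of_isOpen hopen]
    refine ⟨fun r hr => (hv' r hr).differentiableAt.differentiableWithinAt, ?_, ?_⟩
    · intro h; simp at h
    · rw [contDiffOn_zero]; exact hwc.congr hdv
  have hcd : ContDiffOn ℝ 2 u (Ioi R) := by
    rw [show (2 : WithTop ℕ∞) = 1 + 1 from rfl, contDiffOn_succ_iff_deriv_of_isOpen hopen]
    exact ⟨fun r hr => (hu' r hr).differentiableAt.differentiableWithinAt,
      fun h => by simp at h, hv1.congr hdu⟩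
  refine ⟨hcd, ?_, ?_⟩
  · intro r hr
    have hr0 : (0:ℝ) < r := hR0.trans hr
    have h1 : deriv u =ᶠ[nhds r] v := Filter.eventuallyEq_of_mem (hopen.mem_nhds hr) hdu
    rw [h1.deriv_eq, (hv' r hr).deriv, hdu hr, hu2 r]
    simp only [hwdef, hvdef, hgmdef, hgpdef]
    have e1 : r ^ (μp - 2) = r ^ μp / r ^ 2 := by
      rw [Real.rpow_sub hr0, show ((2:ℝ)) = ((2:ℕ):ℝ) by norm_num, Real.rpow_natCast]
    have e2 : r ^ (μm - 2) = r ^ μm / r ^ 2 := by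
      rw [Real.rpow_sub hr0, show ((2:ℝ)) = ((2:ℕ):ℝ) by norm_num, Real.rpow_natCast]
    have e3 : r ^ (μp - 1) = r ^ μp / r := by rw [Real.rpow_sub hr0, Real.rpow_one]
    have e4 : r ^ (μm - 1) = r ^ μm / r := by rw [Real.rpow_sub hr0, Real.rpow_one]
    have eZm : r ^ (μm + (d:ℝ) - 1) = r ^ μm * r ^ ((d:ℝ) - 1) := by
      rw [← Real.rpow_add hr0]; ring_nf
    have eZp : r ^ (μp + (d:ℝ) - 1) = r ^ μp * r ^ ((d:ℝ) - 1) := by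
      rw [← Real.rpow_add hr0]; ring_nf
    have eXYZ : r ^ μp * (r ^ μm * r ^ ((d:ℝ) - 1)) = r := by
      rw [← Real.rpow_add hr0, ← Real.rpow_add hr0,
        show μp + (μm + ((d:ℝ) - 1)) = 1 by linarith [hsum], Real.rpow_one]
    rw [e1, e2, e3, e4, eZm, eZp]
    have hrinv : r * r⁻¹ = 1 := mul_inv_cancel₀ hr0.ne'
    have hcinv : c * c⁻¹ = 1 := mul_inv_cancel₀ hc0.ne'
    linear_combination (r ^ μp * Fm r / (c * r ^ 2)) * hrootp
      - (r ^ μm * Fp r / (c * r ^ 2)) * hrootm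
      + (f r * (μp - μm) / (c * r)) * eXYZ
      + (f r * (μp - μm) / c) * hrinv
      + (f r / c) * hdiff
      + (f r) * hcinv
  · intro r hr
    have hr0 : (0:ℝ) < r := lt_of_lt_of_le hR0 hr
    have key : ∀ (μ : ℝ), 0 < μ + (d:ℝ) - δ →
        |∫ s in R..r, s ^ (μ + (d:ℝ) - 1) * f s| ≤
          B * r ^ (μ + (d:ℝ) - δ) / (μ + (d:ℝ) - δ) := by
      intro μ hμ
      have hcont : ContinuousOn (fun s : ℝ => s ^ (μ + (d:ℝ) - 1) * f s) (uIcc R r) :=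
        ((hpow _).mul hf).mono (hsubIcc r hr)
      have hcont2 : ContinuousOn (fun s : ℝ => B * s ^ (μ + (d:ℝ) - 1 - δ)) (uIcc R r) :=
        continuousOn_const.mul ((hpow _).mono (hsubIcc r hr))
      calc |∫ s in R..r, s ^ (μ + (d:ℝ) - 1) * f s|
          ≤ ∫ s in R..r, |s ^ (μ + (d:ℝ) - 1) * f s| :=
            intervalIntegral.abs_integral_le_integral_abs hr
        _ ≤ ∫ s in R..r, B * s ^ (μ + (d:ℝ) - 1 - δ) := by
            refine intervalIntegral.integral_mono_on hr
              (hcont.abs.intervalIntegrable) (hcont2.intervalIntegrable) ?_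
            intro s hs
            have hs0 : (0:ℝ) < s := lt_of_lt_of_le hR0 hs.1
            rw [abs_mul, abs_of_nonneg (Real.rpow_nonneg hs0.le _)]
            calc s ^ (μ + (d:ℝ) - 1) * |f s| ≤ s ^ (μ + (d:ℝ) - 1) * (B * s ^ (-δ)) :=
                mul_le_mul_of_nonneg_left (hfb s hs.1) (Real.rpow_nonneg hs0.le _)
              _ = B * s ^ (μ + (d:ℝ) - 1 - δ) := by
                rw [show μ + (d:ℝ) - 1 - δ = (μ + (d:ℝ) - 1) + (-δ) by ring,
                  Real.rpow_add hs0]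
                ring
        _ = B * ((r ^ (μ + (d:ℝ) - δ) - R ^ (μ + (d:ℝ) - δ)) / (μ + (d:ℝ) - δ)) := by
            rw [intervalIntegral.integral_const_mul,
              integral_rpow (Or.inl (by linarith : (-1:ℝ) < μ + (d:ℝ) - 1 - δ)),
              show μ + (d:ℝ) - 1 - δ + 1 = μ + (d:ℝ) - δ by ring]
        _ ≤ B * r ^ (μ + (d:ℝ) - δ) / (μ + (d:ℝ) - δ) := by
            rw [mul_div_assoc]
            have hRa : (0:ℝ) ≤ R ^ (μ + (d:ℝ) - δ) := Real.rpow_nonneg hR0.le _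
            gcongr
            linarith
    have hIm := key μm hδ'
    have hIp := key μp hap
    have em : r ^ μp * r ^ (μm + (d:ℝ) - δ) = r ^ (2 - δ) := by
      rw [← Real.rpow_add hr0]; congr 1; linarith [hsum]
    have ep : r ^ μm * r ^ (μp + (d:ℝ) - δ) = r ^ (2 - δ) := by
      rw [← Real.rpow_add hr0]; congr 1; linarith [hsum]
    calc |u r| = |r ^ μp / c * Fm r - r ^ μm / c * Fp r| := by rw [hu2]
      _ ≤ |r ^ μp / c * Fm r| + |r ^ μm / c * Fp r| := abs_sub _ _
      _ = r ^ μp / c * |Fm r| + r ^ μm / c * |Fp r| := by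
          rw [abs_mul, abs_mul, abs_of_nonneg (by positivity : (0:ℝ) ≤ r ^ μp / c),
            abs_of_nonneg (by positivity : (0:ℝ) ≤ r ^ μm / c)]
      _ ≤ r ^ μp / c * (B * r ^ (μm + (d:ℝ) - δ) / (μm + (d:ℝ) - δ))
          + r ^ μm / c * (B * r ^ (μp + (d:ℝ) - δ) / (μp + (d:ℝ) - δ)) := by
          gcongr <;> positivity
      _ = (B / c) * (1 / (μm + (d:ℝ) - δ) + 1 / (μp + (d:ℝ) - δ)) * r ^ (2 - δ) := by
          linear_combination (B * c⁻¹ * (μm + (d:ℝ) - δ)⁻¹) * em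
            + (B * c⁻¹ * (μp + (d:ℝ) - δ)⁻¹) * ep
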